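/- Let k ≥ 4 and let ({u}, N(u) ∪ S_u, W(p_3), …, W(p_{k−1}), {v}) be a solution for an instance (G,u,v) of P_k-Suitability. If S′_u ⊆ S_u is such that N(u) ∪ S′_u induces a connected subgraph of G, then ({u}, N(u) ∪ cl(S′_u), W(p_3) ∪ (S_u ∖ cl(S′_u)), W(p_4), …, W(p_{k−1}), {v}) is also a solution for (G,u,v), where cl(S′_u) denotes the closure of S′_u. -/

import Mathlib

open SimpleGraph

section Helpers
variable {V : Type} {G : SimpleGraph V}

lemma walk_of_induce {A : Set V} : ∀ {a b : A} (_ : (G.induce A).Walk a b),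
    ∃ w' : G.Walk a.1 b.1, ∀ x ∈ w'.support, x ∈ A := by
  intro a b w
  induction w with
  | nil => exact ⟨.nil, by rintro x hx; simp at hx; subst hx; exact Subtype.coe_prop _⟩
  | @cons a c b h p ih =>
    obtain ⟨w', hw'⟩ := ih
    refine ⟨.cons (show G.Adj a.1 c.1 from h) w', ?_⟩
    intro x hx
    rw [SimpleGraph.Walk.support_cons] at hx
    rcases List.mem_cons.mp hx with rfl | hx
    · exact a.2
    · exact hw' x hx

lemma reachable_induce_of_walk {A : Set V} : ∀ {a b : V} (w : G.Walk a b)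
    (_ : ∀ x ∈ w.support, x ∈ A) (ha : a ∈ A) (hb : b ∈ A),
    (G.induce A).Reachable ⟨a, ha⟩ ⟨b, hb⟩ := by
  intro a b w
  induction w with
  | nil => intro _ ha hb; rfl
  | @cons a c b h p ih =>
    intro hsup ha hb
    have hc : c ∈ A := hsup c (by simp)
    have h1 : (G.induce A).Adj ⟨a, ha⟩ ⟨c, hc⟩ := h
    exact h1.reachable.trans (ih (fun x hx => hsup x (by simp [hx])) hc hb)

lemma reach_mono {A B : Set V} (hAB : A ⊆ B) {a b : V} (ha : a ∈ A) (hb : b ∈ A)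
    (h : (G.induce A).Reachable ⟨a, ha⟩ ⟨b, hb⟩) :
    (G.induce B).Reachable ⟨a, hAB ha⟩ ⟨b, hAB hb⟩ := by
  obtain ⟨w⟩ := h
  obtain ⟨w', hw'⟩ := walk_of_induce w
  exact reachable_induce_of_walk w' (fun x hx => hAB (hw' x hx)) _ _

lemma exists_cross (P : Set V) : ∀ {a b : V} (w : G.Walk a b), a ∉ P → b ∈ P →
    ∃ x y, G.Adj x y ∧ x ∈ w.support ∧ y ∈ w.support ∧ x ∉ P ∧ y ∈ P := by
  intro a b w
  induction w with
  | nil => intro h1 h2; exact absurd h2 h1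
  | @cons a c b h p ih =>
    intro h1 h2
    by_cases hc : c ∈ P
    · exact ⟨a, c, h, by simp, by simp, h1, hc⟩
    · obtain ⟨x, y, hxy, hx, hy, hxp, hyp⟩ := ih hc h2
      exact ⟨x, y, hxy, by simp [hx], by simp [hy], hxp, hyp⟩

end Helpers

/-- `f` is an `H`-witness structure of `G`: every bag `f x` is nonempty and induces a connected
subgraph of `G`, the bags partition the vertex set of `G`, and for distinct `x`, `y` there is
an edge of `G` between the bags `f x` and `f y` if and only if `x` and `y` are adjacent in `H`. -/
def IsWitnessStructure {V W : Type} (G : SimpleGraph V) (H : SimpleGraph W)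
    (f : W → Set V) : Prop :=
  (∀ x, (f x).Nonempty) ∧
  (∀ x, (G.induce (f x)).Connected) ∧
  (∀ v : V, ∃! x, v ∈ f x) ∧
  (∀ x y, x ≠ y → ((∃ a ∈ f x, ∃ b ∈ f y, G.Adj a b) ↔ H.Adj x y))

/-- `G` contains `H` as a contraction: `G` has an `H`-witness structure. -/
def ContainsAsContraction {V W : Type} (G : SimpleGraph V) (H : SimpleGraph W) : Prop :=
  ∃ f : W → Set V, IsWitnessStructure G H f

/-- `(u, v)` is a `P_k`-suitable pair of `G`: `G` has a `P_k`-witness structure whose bag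
at the first vertex of the path is `{u}` and whose bag at the last vertex is `{v}`. -/
def PkSuitable {V : Type} (k : ℕ) (G : SimpleGraph V) (u v : V) : Prop :=
  ∃ f : Fin k → Set V, IsWitnessStructure G (pathGraph k) f ∧
    (∀ i : Fin k, (i : ℕ) = 0 → f i = {u}) ∧
    (∀ i : Fin k, (i : ℕ) = k - 1 → f i = {v})

/-- The set `T = V(G) ∖ (N[u] ∪ N[v])` of vertices outside the closed neighbourhoods
of `u` and `v`. -/
def Tset {V : Type} (G : SimpleGraph V) (u v : V) : Set V :=
  (insert u (G.neighborSet u) ∪ insert v (G.neighborSet v))ᶜ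

/-- A solution for the instance `(G, u, v)` of `P_k`-Suitability, with the witness bags `f`
and distinguished sets `Su`, `Sv`: a `P_k`-witness structure of `G` with
`W(p_1) = {u}`, `W(p_2) = N(u) ∪ Su`, `W(p_{k-1}) = N(v) ∪ Sv` and `W(p_k) = {v}`,
where `Su` and `Sv` are disjoint subsets of `T = V(G) ∖ (N[u] ∪ N[v])`. -/
def IsSolutionWith {V : Type} (k : ℕ) (G : SimpleGraph V) (u v : V)
    (f : Fin k → Set V) (Su Sv : Set V) : Prop :=
  IsWitnessStructure G (pathGraph k) f ∧
  Su ⊆ Tset G u v ∧ Sv ⊆ Tset G u v ∧ Disjoint Su Sv ∧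
  (∀ i : Fin k, (i : ℕ) = 0 → f i = {u}) ∧
  (∀ i : Fin k, (i : ℕ) = 1 → f i = G.neighborSet u ∪ Su) ∧
  (∀ i : Fin k, (i : ℕ) = k - 2 → f i = G.neighborSet v ∪ Sv) ∧
  (∀ i : Fin k, (i : ℕ) = k - 1 → f i = {v})

/-- The closure of `S'u ⊆ Su`: `S'u` together with all vertices `s ∈ Su` such that every
path in `G` from `s` to `v` contains a vertex of `N(u) ∪ S'u`. -/
def closureOf {V : Type} (G : SimpleGraph V) (u v : V) (Su S'u : Set V) : Set V :=
  S'u ∪ {s ∈ Su | ∀ (w : G.Walk s v), w.IsPath →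
    ∃ a ∈ w.support, a ∈ G.neighborSet u ∪ S'u}

theorem stmt_10 {V : Type} [Fintype V] (G : SimpleGraph V) (k : ℕ) (hk : 4 ≤ k)
    (u v : V) (f : Fin k → Set V) (Su Sv : Set V)
    (hsol : IsSolutionWith k G u v f Su Sv)
    (S'u : Set V) (hsub : S'u ⊆ Su)
    (hconn : (G.induce (G.neighborSet u ∪ S'u)).Connected) :
    IsSolutionWith k G u v
      (fun i =>
        if (i : ℕ) = 1 then G.neighborSet u ∪ closureOf G u v Su S'u
        else if (i : ℕ) = 2 then f i ∪ (Su \ closureOf G u v Su S'u)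
        else f i)
      (closureOf G u v Su S'u)
      (if k = 4 then Sv ∪ (Su \ closureOf G u v Su S'u) else Sv) := by
    classical
  obtain ⟨⟨hne, hc, hpart, hadj⟩, hSuT, hSvT, hdisjSS, hb0, hb1, hbk2, hbk1⟩ := hsol
  set C := closureOf G u v Su S'u with hCdef
  set NS' : Set V := G.neighborSet u ∪ S'u with hNS'def
  let i0 : Fin k := ⟨0, by omega⟩
  let i1 : Fin k := ⟨1, by omega⟩
  let i2 : Fin k := ⟨2, by omega⟩
  let ik1 : Fin k := ⟨k - 1, by omega⟩
  have hi0v : (i0 : ℕ) = 0 := rfl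
  have hi1v : (i1 : ℕ) = 1 := rfl
  have hi2v : (i2 : ℕ) = 2 := rfl
  have hik1v : (ik1 : ℕ) = k - 1 := rfl
  have hfne : ∀ {a b : Fin k}, (a : ℕ) ≠ (b : ℕ) → a ≠ b :=
    fun h e => h (congrArg Fin.val e)
  have hf0 : f i0 = {u} := hb0 i0 rfl
  have hf1 : f i1 = G.neighborSet u ∪ Su := hb1 i1 rfl
  have hfk1 : f ik1 = {v} := hbk1 ik1 rfl
  have hmemu : ∀ {x : V} {i j : Fin k}, x ∈ f i → x ∈ f j → i = j := by
    intro x i j hi hj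
    exact ((hpart x).unique hi hj)
  have cover : ∀ x : V, ∃ i, x ∈ f i := fun x => (hpart x).exists
  have habag : ∀ {a b : V} {i j : Fin k}, a ∈ f i → b ∈ f j → G.Adj a b → i ≠ j →
      ((i : ℕ) + 1 = (j : ℕ) ∨ (j : ℕ) + 1 = (i : ℕ)) := by
    intro a b i j ha hb hab hij
    exact pathGraph_adj.mp ((hadj i j hij).mp ⟨a, ha, b, hb, hab⟩)
  have hedge : ∀ i j : Fin k, i ≠ j → ((i : ℕ) + 1 = (j : ℕ) ∨ (j : ℕ) + 1 = (i : ℕ)) →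
      ∃ a ∈ f i, ∃ b ∈ f j, G.Adj a b := by
    intro i j hij hp
    exact (hadj i j hij).mpr (pathGraph_adj.mpr hp)
  -- Tset facts
  have hSuNu : ∀ s ∈ Su, s ∉ G.neighborSet u := by
    intro s hs hn
    exact (hSuT hs) (Or.inl (Set.mem_insert_of_mem _ hn))
  have hSune_u : ∀ s ∈ Su, s ≠ u := by
    intro s hs h
    exact (hSuT hs) (Or.inl (h ▸ Set.mem_insert _ _))
  have hSune_v : ∀ s ∈ Su, s ≠ v := by
    intro s hs h
    exact (hSuT hs) (Or.inr (h ▸ Set.mem_insert _ _))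
  -- closure facts
  have hCSu : C ⊆ Su := by
    rw [hCdef]
    rintro s (hs | hs)
    · exact hsub hs
    · exact hs.1
  have hS'C : S'u ⊆ C := fun s hs => Or.inl hs
  have hNS'f1 : NS' ⊆ f i1 := by
    rw [hf1]
    rintro x (hx | hx)
    · exact Or.inl hx
    · exact Or.inr (hsub hx)
  have hmemC : ∀ s ∈ Su, (∀ w : G.Walk s v, ∃ a ∈ w.support, a ∈ NS') → s ∈ C := by
    intro s h1 h2
    exact Or.inr ⟨h1, fun w _ => h2 w⟩
  have hKhit : ∀ s ∈ C, s ∉ S'u → ∀ w : G.Walk s v, ∃ a ∈ w.support, a ∈ NS' := by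
    intro s hsC hs w
    rcases hsC with h | h
    · exact absurd h hs
    · obtain ⟨a, ha, haN⟩ := h.2 w.bypass w.bypass_isPath
      exact ⟨a, w.support_bypass_subset ha, haN⟩
  have hnotC : ∀ s ∈ Su, s ∉ C → ∃ w : G.Walk s v, ∀ x ∈ w.support, x ∉ NS' := by
    intro s h1 h2
    by_contra hcon
    push_neg at hcon
    exact h2 (hmemC s h1 (fun w => hcon w))
  -- neighborhood of u nonempty
  have hNu : ∃ w0, w0 ∈ G.neighborSet u := by
    obtain ⟨a, ha, b, hb, hab⟩ := hedge i0 i1 (hfne (by omega)) (Or.inl (by omega))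
    rw [hf0] at ha
    rcases ha with rfl
    exact ⟨b, hab⟩
  obtain ⟨w0, hw0⟩ := hNu
  have hw0f1 : w0 ∈ f i1 := by rw [hf1]; exact Or.inl hw0
  -- top bag case of the escape lemma
  have htop : ∀ (j : Fin k), (j : ℕ) = k - 1 → ∀ t ∈ f j,
      ∃ w : G.Walk t v, ∀ x ∈ w.support, x ∉ f i0 ∧ x ∉ f i1 := by
    intro j hj t ht
    have hjeq : j = ik1 := by
      rw [Fin.ext_iff]; omega
    subst hjeq
    rw [hfk1] at ht
    rcases ht with rfl
    refine ⟨.nil, ?_⟩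
    intro x hx
    simp only [SimpleGraph.Walk.support_nil, List.mem_singleton] at hx
    subst hx
    have hvk1 : x ∈ f ik1 := by rw [hfk1]; rfl
    constructor
    · intro hmem
      have := hmemu hmem hvk1
      rw [Fin.ext_iff] at this; omega
    · intro hmem
      have := hmemu hmem hvk1
      rw [Fin.ext_iff] at this; omega
  -- escape lemma
  have escape_aux : ∀ (d : ℕ) (j : Fin k), (j : ℕ) = k - 1 - d → 2 ≤ (j : ℕ) →
      ∀ t ∈ f j, ∃ w : G.Walk t v, ∀ x ∈ w.support, x ∉ f i0 ∧ x ∉ f i1 := by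
    intro d
    induction d with
    | zero =>
      intro j hj h2 t ht
      exact htop j (by omega) t ht
    | succ d ih =>
      intro j hj h2 t ht
      by_cases hjtop : (j : ℕ) = k - 1
      · exact htop j hjtop t ht
      · have hlt : (j : ℕ) < k - 1 := by
          have := j.isLt; omega
        have hj' : (j : ℕ) + 1 < k := by omega
        have hjj' : j ≠ (⟨(j : ℕ) + 1, hj'⟩ : Fin k) := hfne (by show (j : ℕ) ≠ (j : ℕ) + 1; omega)
        obtain ⟨a, ha, b, hb, hab⟩ := hedge j ⟨(j : ℕ) + 1, hj'⟩ hjj' (Or.inl rfl)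
        obtain ⟨wI⟩ := (hc j).preconnected ⟨t, ht⟩ ⟨a, ha⟩
        obtain ⟨w1, hw1⟩ := walk_of_induce wI
        obtain ⟨w2, hw2⟩ := ih ⟨(j : ℕ) + 1, hj'⟩ (by show (j : ℕ) + 1 = k - 1 - d; omega) (by show 2 ≤ (j : ℕ) + 1; omega) b hb
        refine ⟨w1.append (.cons hab w2), ?_⟩
        intro x hx
        have hnotj : ∀ y, y ∈ f j → y ∉ f i0 ∧ y ∉ f i1 := by
          intro y hy
          constructor
          · intro hmem
            have := hmemu hmem hy
            rw [Fin.ext_iff] at this; omega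
          · intro hmem
            have := hmemu hmem hy
            rw [Fin.ext_iff] at this; omega
        rcases (SimpleGraph.Walk.mem_support_append_iff _ _).mp hx with hx | hx
        · exact hnotj x (hw1 x hx)
        · rw [SimpleGraph.Walk.support_cons] at hx
          rcases List.mem_cons.mp hx with rfl | hx
          · exact hnotj x ha
          · exact hw2 x hx
  have escape : ∀ (j : Fin k), 2 ≤ (j : ℕ) → ∀ t ∈ f j,
      ∃ w : G.Walk t v, ∀ x ∈ w.support, x ∉ f i0 ∧ x ∉ f i1 := by
    intro j h2 t ht
    have hjk : (j : ℕ) < k := j.isLt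
    exact escape_aux (k - 1 - (j : ℕ)) j (by omega) h2 t ht
  have someWalk : ∀ x ∈ f i1, Nonempty (G.Walk x v) := by
    intro x hx
    obtain ⟨a, ha, b, hb, hab⟩ := hedge i1 i2 (hfne (by omega)) (Or.inl (by omega))
    obtain ⟨wI⟩ := (hc i1).preconnected ⟨x, hx⟩ ⟨a, ha⟩
    obtain ⟨w1, _⟩ := walk_of_induce wI
    obtain ⟨w2, _⟩ := escape i2 (by omega) b hb
    exact ⟨w1.append (.cons hab w2)⟩
  -- classification of neighbours of Su-vertices
  have hclass : ∀ {t t' : V}, t ∈ Su → G.Adj t t' → t' ∉ G.neighborSet u →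
      t' ∈ Su ∨ t' ∈ f i2 := by
    intro t t' htSu h ht'N
    have htf1 : t ∈ f i1 := by rw [hf1]; exact Or.inr htSu
    obtain ⟨j, hj⟩ := cover t'
    by_cases hj1 : (j : ℕ) = 1
    · have : j = i1 := by rw [Fin.ext_iff]; omega
      subst this
      rw [hf1] at hj
      rcases hj with hj | hj
      · exact absurd hj ht'N
      · exact Or.inl hj
    · have hne1 : i1 ≠ j := hfne (by omega)
      have hpa := habag htf1 hj h hne1
      rw [hi1v] at hpa
      by_cases hj0 : (j : ℕ) = 0
      · exfalso
        have : j = i0 := by rw [Fin.ext_iff]; omega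
        subst this
        rw [hf0] at hj
        rcases hj with rfl
        exact hSuNu t htSu ((G.adj_comm _ _).mp h)
      · have : j = i2 := by rw [Fin.ext_iff]; omega
        subst this
        exact Or.inr hj
  -- escape walks avoid NS'
  have escape' : ∀ t ∈ f i2, ∃ w : G.Walk t v, ∀ x ∈ w.support, x ∉ NS' := by
    intro t ht
    obtain ⟨w, hw⟩ := escape i2 (by omega) t ht
    exact ⟨w, fun x hx hxN => (hw x hx).2 (hNS'f1 hxN)⟩
  -- main connectivity lemma for the new bag at index 1
  have lemP : ∀ (t b : V) (w : G.Walk t b), b = v → t ∈ Su →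
      (∀ w2 : G.Walk t v, ∃ a ∈ w2.support, a ∈ NS') → t ∉ NS' →
      ∃ a ∈ NS', ∃ w' : G.Walk t a, ∀ x ∈ w'.support, x ∈ G.neighborSet u ∪ C := by
    intro t b w
    induction w with
    | nil =>
      intro hb htSu _ _
      exact absurd (hb ▸ rfl) (hSune_v _ htSu)
    | @cons t t' b h p ih =>
      intro hb htSu hits htN
      have htC : t ∈ C := hmemC t htSu hits
      by_cases ht'N : t' ∈ NS'
      · refine ⟨t', ht'N, .cons h .nil, ?_⟩
        intro x hx
        simp only [SimpleGraph.Walk.support_cons, SimpleGraph.Walk.support_nil,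
          List.mem_cons, List.mem_singleton, List.not_mem_nil, or_false] at hx
        rcases hx with rfl | rfl
        · exact Or.inr htC
        · rcases ht'N with hh | hh
          · exact Or.inl hh
          · exact Or.inr (hS'C hh)
      · have ht'Nu : t' ∉ G.neighborSet u := fun hmem => ht'N (Or.inl hmem)
        rcases hclass htSu h ht'Nu with ht'Su | ht'2
        · have hits' : ∀ w2 : G.Walk t' v, ∃ a ∈ w2.support, a ∈ NS' := by
            intro w2
            obtain ⟨a, ha, haN⟩ := hits (.cons h w2)
            rw [SimpleGraph.Walk.support_cons] at ha
            rcases List.mem_cons.mp ha with rfl | ha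
            · exact absurd haN htN
            · exact ⟨a, ha, haN⟩
          obtain ⟨a, haN, w', hw'⟩ := ih hb ht'Su hits' ht'N
          refine ⟨a, haN, .cons h w', ?_⟩
          intro x hx
          rw [SimpleGraph.Walk.support_cons] at hx
          rcases List.mem_cons.mp hx with rfl | hx
          · exact Or.inr htC
          · exact hw' x hx
        · exfalso
          obtain ⟨we, hwe⟩ := escape' t' ht'2
          obtain ⟨a, ha, haN⟩ := hits (.cons h we)
          rw [SimpleGraph.Walk.support_cons] at ha
          rcases List.mem_cons.mp ha with rfl | ha
          · exact htN haN
          · exact hwe a ha haN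
  -- main connectivity lemma for the new bag at index 2
  have lemQ : ∀ (t b : V) (w : G.Walk t b), b = v → t ∈ Su → t ∉ C →
      (∀ x ∈ w.support, x ∉ NS') →
      ∃ c ∈ f i2, ∃ w' : G.Walk t c, ∀ x ∈ w'.support, x ∈ f i2 ∪ (Su \ C) := by
    intro t b w
    induction w with
    | nil =>
      intro hb htSu _ _
      exact absurd (hb ▸ rfl) (hSune_v _ htSu)
    | @cons t t' b h p ih =>
      intro hb htSu htC havoid
      have htB2 : t ∈ f i2 ∪ (Su \ C) := Or.inr ⟨htSu, htC⟩
      have havoid' : ∀ x ∈ p.support, x ∉ NS' := by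
        intro x hx
        exact havoid x (by rw [SimpleGraph.Walk.support_cons]; exact List.mem_cons_of_mem _ hx)
      have ht'N : t' ∉ NS' := havoid' t' p.start_mem_support
      by_cases ht'2 : t' ∈ f i2
      · refine ⟨t', ht'2, .cons h .nil, ?_⟩
        intro x hx
        simp only [SimpleGraph.Walk.support_cons, SimpleGraph.Walk.support_nil,
          List.mem_cons, List.mem_singleton, List.not_mem_nil, or_false] at hx
        rcases hx with rfl | rfl
        · exact htB2
        · exact Or.inl ht'2
      · have ht'Nu : t' ∉ G.neighborSet u := fun hmem => ht'N (Or.inl hmem)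
        rcases hclass htSu h ht'Nu with ht'Su | h2
        · have ht'C : t' ∉ C := by
            intro hC
            by_cases hS' : t' ∈ S'u
            · exact ht'N (Or.inr hS')
            · obtain ⟨a, ha, haN⟩ := hKhit t' hC hS' (hb ▸ p)
              -- a is in the support of p (up to the cast)
              have ha' : a ∈ p.support := by
                subst hb; exact ha
              exact havoid' a ha' haN
          obtain ⟨c, hc2, w', hw'⟩ := ih hb ht'Su ht'C havoid'
          refine ⟨c, hc2, .cons h w', ?_⟩
          intro x hx
          rw [SimpleGraph.Walk.support_cons] at hx
          rcases List.mem_cons.mp hx with rfl | hx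
          · exact htB2
          · exact hw' x hx
        · exact absurd h2 ht'2
  -- the two modified bags
  set B1 : Set V := G.neighborSet u ∪ C with hB1def
  set B2 : Set V := f i2 ∪ (Su \ C) with hB2def
  have hNS'B1 : NS' ⊆ B1 := by
    rintro x (hx | hx)
    · exact Or.inl hx
    · exact Or.inr (hS'C hx)
  have hB1f1 : B1 ⊆ f i1 := by
    rw [hf1]
    rintro x (hx | hx)
    · exact Or.inl hx
    · exact Or.inr (hCSu hx)
  have reachCore1 : ∀ z (hz : z ∈ B1), ∃ a, ∃ haN : a ∈ NS',
      (G.induce B1).Reachable ⟨z, hz⟩ ⟨a, hNS'B1 haN⟩ := by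
    intro z hz
    by_cases hzN : z ∈ NS'
    · exact ⟨z, hzN, Reachable.refl _⟩
    · have hzC : z ∈ C := by
        rcases hz with h | h
        · exact absurd (Or.inl h : z ∈ NS') hzN
        · exact h
      have hzS'u : z ∉ S'u := fun h => hzN (Or.inr h)
      have hzSu : z ∈ Su := hCSu hzC
      have hits := hKhit z hzC hzS'u
      obtain ⟨w⟩ := someWalk z (by rw [hf1]; exact Or.inr hzSu)
      obtain ⟨a, haN, w', hw'⟩ := lemP z v w rfl hzSu hits hzN
      exact ⟨a, haN, reachable_induce_of_walk w' hw' hz (hNS'B1 haN)⟩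
  have hB1conn : (G.induce B1).Connected := by
    rw [connected_iff]
    constructor
    · rintro ⟨x, hx⟩ ⟨y, hy⟩
      obtain ⟨a, haN, hra⟩ := reachCore1 x hx
      obtain ⟨b, hbN, hrb⟩ := reachCore1 y hy
      have hab := reach_mono hNS'B1 haN hbN (hconn.preconnected ⟨a, haN⟩ ⟨b, hbN⟩)
      exact hra.trans (hab.trans hrb.symm)
    · exact ⟨⟨w0, Or.inl hw0⟩⟩
  have hf2B2 : f i2 ⊆ B2 := fun x hx => Or.inl hx
  have reachCore2 : ∀ z (hz : z ∈ B2), ∃ a, ∃ haN : a ∈ f i2,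
      (G.induce B2).Reachable ⟨z, hz⟩ ⟨a, hf2B2 haN⟩ := by
    intro z hz
    by_cases hz2 : z ∈ f i2
    · exact ⟨z, hz2, Reachable.refl _⟩
    · have hSuC : z ∈ Su \ C := hz.resolve_left hz2
      obtain ⟨w, hw⟩ := hnotC z hSuC.1 hSuC.2
      obtain ⟨c, hc2, w', hw'⟩ := lemQ z v w rfl hSuC.1 hSuC.2 hw
      exact ⟨c, hc2, reachable_induce_of_walk w' hw' hz (hf2B2 hc2)⟩
  have hB2conn : (G.induce B2).Connected := by
    rw [connected_iff]
    constructor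
    · rintro ⟨x, hx⟩ ⟨y, hy⟩
      obtain ⟨a, haN, hra⟩ := reachCore2 x hx
      obtain ⟨b, hbN, hrb⟩ := reachCore2 y hy
      have hab := reach_mono hf2B2 haN hbN ((hc i2).preconnected ⟨a, haN⟩ ⟨b, hbN⟩)
      exact hra.trans (hab.trans hrb.symm)
    · obtain ⟨x, hx⟩ := hne i2
      exact ⟨⟨x, Or.inl hx⟩⟩
  -- an edge between the two new bags
  have hedge12 : ∃ a ∈ B1, ∃ b ∈ B2, G.Adj a b := by
    obtain ⟨a, ha, b, hb, hab⟩ := hedge i1 i2 (hfne (by omega)) (Or.inl (by omega))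
    by_cases haB1 : a ∈ B1
    · exact ⟨a, haB1, b, Or.inl hb, hab⟩
    · have haSu : a ∈ Su := by
        rw [hf1] at ha
        rcases ha with h | h
        · exact absurd (Or.inl h : a ∈ B1) haB1
        · exact h
      obtain ⟨wI⟩ := (hc i1).preconnected ⟨a, by rw [hf1]; exact Or.inr haSu⟩ ⟨w0, hw0f1⟩
      obtain ⟨w1, hw1⟩ := walk_of_induce wI
      obtain ⟨x, y, hxy, hxs, hys, hxP, hyP⟩ := exists_cross B1 w1 haB1 (Or.inl hw0)
      have hxf1 : x ∈ f i1 := hw1 x hxs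
      have hxSu : x ∈ Su := by
        rw [hf1] at hxf1
        rcases hxf1 with h | h
        · exact absurd (Or.inl h : x ∈ B1) hxP
        · exact h
      exact ⟨y, hyP, x, Or.inr ⟨hxSu, fun h => hxP (Or.inr h)⟩, hxy.symm⟩
  -- the main adjacency case analysis
  have hmaino : ∀ x y : Fin k, (x : ℕ) < (y : ℕ) →
      ((∃ a ∈ (if (x : ℕ) = 1 then B1 else if (x : ℕ) = 2 then f x ∪ (Su \ C) else f x),
        ∃ b ∈ (if (y : ℕ) = 1 then B1 else if (y : ℕ) = 2 then f y ∪ (Su \ C) else f y),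
        G.Adj a b) ↔ (pathGraph k).Adj x y) := by
    intro x y hlt
    by_cases hy1 : (y : ℕ) = 1
    · have hx0 : (x : ℕ) = 0 := by omega
      have hxe : x = i0 := by rw [Fin.ext_iff]; omega
      have hye : y = i1 := by rw [Fin.ext_iff]; omega
      subst hxe; subst hye
      constructor
      · intro _
        exact pathGraph_adj.mpr (Or.inl (by omega))
      · intro _
        refine ⟨u, ?_, w0, ?_, hw0⟩
        · rw [if_neg (by omega), if_neg (by omega), hf0]; rfl
        · rw [if_pos hi1v]; exact Or.inl hw0
    · by_cases hy2 : (y : ℕ) = 2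
      · have hye : y = i2 := by rw [Fin.ext_iff]; omega
        subst hye
        by_cases hx0 : (x : ℕ) = 0
        · have hxe : x = i0 := by rw [Fin.ext_iff]; omega
          subst hxe
          constructor
          · rintro ⟨a, ha, b, hb, hab⟩
            exfalso
            rw [if_neg (by omega), if_neg (by omega), hf0] at ha
            rcases ha with rfl
            rw [if_neg (by omega), if_pos hi2v] at hb
            rcases hb with h | h
            · have huf0 : a ∈ f i0 := by rw [hf0]; rfl
              have := habag huf0 h hab (hfne (by omega))
              omega
            · exact hSuNu b h.1 hab
          · intro hA
            have := pathGraph_adj.mp hA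
            omega
        · have hx1 : (x : ℕ) = 1 := by omega
          have hxe : x = i1 := by rw [Fin.ext_iff]; omega
          subst hxe
          constructor
          · intro _
            exact pathGraph_adj.mpr (Or.inl (by omega))
          · intro _
            obtain ⟨a, ha, b, hb, hab⟩ := hedge12
            refine ⟨a, ?_, b, ?_, hab⟩
            · rw [if_pos hi1v]; exact ha
            · rw [if_neg (by omega), if_pos hi2v]; exact hb
      · have hy3 : 3 ≤ (y : ℕ) := by omega
        by_cases hx1 : (x : ℕ) = 1
        · have hxe : x = i1 := by rw [Fin.ext_iff]; omega
          subst hxe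
          constructor
          · rintro ⟨a, ha, b, hb, hab⟩
            exfalso
            rw [if_pos hi1v] at ha
            rw [if_neg hy1, if_neg hy2] at hb
            have := habag (hB1f1 ha) hb hab (hfne (by omega))
            omega
          · intro hA
            have := pathGraph_adj.mp hA
            omega
        · by_cases hx2 : (x : ℕ) = 2
          · have hxe : x = i2 := by rw [Fin.ext_iff]; omega
            subst hxe
            by_cases hy3' : (y : ℕ) = 3
            · constructor
              · intro _
                exact pathGraph_adj.mpr (Or.inl (by omega))
              · intro _
                obtain ⟨a, ha, b, hb, hab⟩ := hedge i2 y (hfne (by omega)) (Or.inl (by omega))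
                refine ⟨a, ?_, b, ?_, hab⟩
                · rw [if_neg (by omega), if_pos hi2v]; exact Or.inl ha
                · rw [if_neg hy1, if_neg hy2]; exact hb
            · constructor
              · rintro ⟨a, ha, b, hb, hab⟩
                exfalso
                rw [if_neg (by omega), if_pos hi2v] at ha
                rw [if_neg hy1, if_neg hy2] at hb
                rcases ha with h | h
                · have := habag h hb hab (hfne (by omega))
                  omega
                · have haf1 : a ∈ f i1 := by rw [hf1]; exact Or.inr h.1
                  have := habag haf1 hb hab (hfne (by omega))
                  omega
              · intro hA
                have := pathGraph_adj.mp hA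
                omega
          · rw [if_neg hx1, if_neg hx2, if_neg hy1, if_neg hy2]
            exact hadj x y (hfne (by omega))
  -- assemble the solution
  refine ⟨⟨?_, ?_, ?_, ?_⟩, ?_, ?_, ?_, ?_, ?_, ?_, ?_⟩
  · -- nonempty
    intro i
    beta_reduce
    by_cases h1 : (i : ℕ) = 1
    · rw [if_pos h1]; exact ⟨w0, Or.inl hw0⟩
    · rw [if_neg h1]
      by_cases h2 : (i : ℕ) = 2
      · rw [if_pos h2]
        obtain ⟨x, hx⟩ := hne i
        exact ⟨x, Or.inl hx⟩
      · rw [if_neg h2]; exact hne i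
  · -- connected
    intro i
    beta_reduce
    by_cases h1 : (i : ℕ) = 1
    · rw [if_pos h1]; exact hB1conn
    · rw [if_neg h1]
      by_cases h2 : (i : ℕ) = 2
      · have hie : i = i2 := by rw [Fin.ext_iff]; omega
        rw [if_pos h2, hie]
        exact hB2conn
      · rw [if_neg h2]; exact hc i
  · -- partition
    intro x
    have hgmem : ∀ j : Fin k,
        x ∈ (if (j : ℕ) = 1 then B1 else if (j : ℕ) = 2 then f j ∪ (Su \ C) else f j) →
        x ∈ f j ∨ (j = i2 ∧ x ∈ Su \ C) := by
      intro j hj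
      split_ifs at hj with h1 h2
      · left
        have hje : j = i1 := by rw [Fin.ext_iff]; omega
        subst hje
        exact hB1f1 hj
      · rcases hj with h | h
        · exact Or.inl h
        · exact Or.inr ⟨by rw [Fin.ext_iff]; omega, h⟩
      · exact Or.inl hj
    have huniq : ∀ j j' : Fin k,
        x ∈ (if (j : ℕ) = 1 then B1 else if (j : ℕ) = 2 then f j ∪ (Su \ C) else f j) →
        x ∈ (if (j' : ℕ) = 1 then B1 else if (j' : ℕ) = 2 then f j' ∪ (Su \ C) else f j') →
        j = j' := by
      intro j j' hj hj'
      rcases hgmem j hj with ha | ⟨rfl, hb⟩ <;> rcases hgmem j' hj' with ha' | ⟨he', hb'⟩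
      · exact hmemu ha ha'
      · subst he'
        exfalso
        have hxf1 : x ∈ f i1 := by rw [hf1]; exact Or.inr hb'.1
        have hje : j = i1 := hmemu ha hxf1
        subst hje
        rw [if_pos hi1v] at hj
        rcases hj with h | h
        · exact hSuNu x hb'.1 h
        · exact hb'.2 h
      · exfalso
        have hxf1 : x ∈ f i1 := by rw [hf1]; exact Or.inr hb.1
        have hje : j' = i1 := hmemu ha' hxf1
        subst hje
        rw [if_pos hi1v] at hj'
        rcases hj' with h | h
        · exact hSuNu x hb.1 h
        · exact hb.2 h
      · rw [he']
    obtain ⟨i, hxi⟩ := cover x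
    by_cases h1 : (i : ℕ) = 1
    · have hie : i = i1 := by rw [Fin.ext_iff]; omega
      subst hie
      rw [hf1] at hxi
      by_cases hB : x ∈ B1
      · refine ⟨i1, ?_, fun y hy => huniq y i1 hy ?_⟩ <;>
          · beta_reduce
            rw [if_pos hi1v]
            exact hB
      · have hxSu : x ∈ Su := by
          rcases hxi with h | h
          · exact absurd (Or.inl h : x ∈ B1) hB
          · exact h
        have hxC : x ∉ C := fun h => hB (Or.inr h)
        refine ⟨i2, ?_, fun y hy => huniq y i2 hy ?_⟩ <;>
          · beta_reduce
            rw [if_neg (by rw [hi2v]; omega), if_pos hi2v]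
            exact Or.inr ⟨hxSu, hxC⟩
    · by_cases h2 : (i : ℕ) = 2
      · have hie : i = i2 := by rw [Fin.ext_iff]; omega
        subst hie
        refine ⟨i2, ?_, fun y hy => huniq y i2 hy ?_⟩ <;>
          · beta_reduce
            rw [if_neg (by rw [hi2v]; omega), if_pos hi2v]
            exact Or.inl hxi
      · refine ⟨i, ?_, fun y hy => huniq y i hy ?_⟩ <;>
          · beta_reduce
            rw [if_neg h1, if_neg h2]
            exact hxi
  · -- adjacency
    intro x y hxy
    rcases Nat.lt_trichotomy (x : ℕ) (y : ℕ) with h | h | h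
    · exact hmaino x y h
    · exact absurd (by rw [Fin.ext_iff]; exact h) hxy
    · constructor
      · rintro ⟨a, ha, b, hb, hab⟩
        exact ((hmaino y x h).mp ⟨b, hb, a, ha, hab.symm⟩).symm
      · intro hA
        obtain ⟨a, ha, b, hb, hab⟩ := (hmaino y x h).mpr hA.symm
        exact ⟨b, hb, a, ha, hab.symm⟩
  · -- C ⊆ Tset
    exact fun s hs => hSuT (hCSu hs)
  · -- new Sv ⊆ Tset
    split_ifs with h
    · exact Set.union_subset hSvT (fun s hs => hSuT hs.1)
    · exact hSvT
  · -- disjointness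
    split_ifs with h
    · rw [Set.disjoint_union_right]
      exact ⟨hdisjSS.mono_left hCSu, Set.disjoint_sdiff_right⟩
    · exact hdisjSS.mono_left hCSu
  · -- bag 0
    intro i h
    beta_reduce
    rw [if_neg (by omega), if_neg (by omega)]
    exact hb0 i h
  · -- bag 1
    intro i h
    beta_reduce
    rw [if_pos h]
  · -- bag k-2
    intro i h
    beta_reduce
    by_cases h4 : k = 4
    · subst h4
      rw [if_neg (by omega), if_pos (by omega), hbk2 i h, if_pos rfl, Set.union_assoc]
    · rw [if_neg (by omega), if_neg (by omega), if_neg h4]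
      exact hbk2 i h
  · -- bag k-1
    intro i h
    beta_reduce
    rw [if_neg (by omega), if_neg (by omega)]
    exact hbk1 i h
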